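/- Let A be a ring, α ∈ A a non-zero-divisor, M_0, M_1, …, M_r A-modules, and φ : M_1 × ⋯ × M_r → M_0 an A-multilinear map. Let n ≥ 1 and suppose given elements y_{i,0},…,y_{i,n−1} and w_{i,0},…,w_{i,n} of M_i for each 1 ≤ i ≤ r, satisfying w_{i,j+1} = w_{i,j} + α·y_{i,j} for all i and all 0 ≤ j ≤ n−1. Then Σ_{i=1}^r Σ_{j=0}^{n−1} φ(w_{1,j+1},…,w_{i−1,j+1}, y_{i,j}, w_{i+1,j},…,w_{r,j}) = Σ_{i=1}^r Σ_{j=0}^{n−1} φ(w_{1,n},…,w_{i−1,n}, y_{i,j}, w_{i+1,0},…,w_{r,0}). -/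

import Mathlib

open Finset

section helpers

variable {M₀ : Type*} [AddCommGroup M₀]

private lemma teleN (r : ℕ) (G : ℕ → M₀) : ∑ i : Fin r, (G (↑i + 1) - G ↑i) = G r - G 0 := by
  rw [Fin.sum_univ_eq_sum_range (fun m => G (m + 1) - G m)]
  exact Finset.sum_range_sub G r

private lemma teleF (n : ℕ) (f : Fin (n + 1) → M₀) :
    ∑ j : Fin n, (f j.succ - f j.castSucc) = f (Fin.last n) - f 0 := by
  have h := teleN n (fun m => f ⟨min m n, by omega⟩)
  have e1 : ∀ j : Fin n, f j.succ = f ⟨min (↑j + 1) n, by omega⟩ := by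
    intro j; congr 1; apply Fin.ext; show (j : ℕ) + 1 = min ((j : ℕ) + 1) n
    have := j.isLt; omega
  have e2 : ∀ j : Fin n, f j.castSucc = f ⟨min (↑j : ℕ) n, by omega⟩ := by
    intro j; congr 1; apply Fin.ext; show (j : ℕ) = min (↑j) n
    have := j.isLt; omega
  have e3 : f (Fin.last n) = f ⟨min n n, by omega⟩ := by
    congr 1; apply Fin.ext; show n = min n n; omega
  have e4 : f 0 = f ⟨min 0 n, by omega⟩ := by
    congr 1
  calc ∑ j : Fin n, (f j.succ - f j.castSucc)
      = ∑ j : Fin n, ((fun m => f ⟨min m n, by omega⟩) (↑j + 1)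
          - (fun m => f ⟨min m n, by omega⟩) ↑j) :=
        Finset.sum_congr rfl fun j _ => by rw [e1 j, e2 j]
    _ = f (Fin.last n) - f 0 := by rw [h, ← e3, ← e4]

end helpers

section key

variable {A : Type*} [CommRing A] {α : A} {r n : ℕ}
    {M : Fin r → Type*} {M₀ : Type*}
    [∀ i, AddCommGroup (M i)] [AddCommGroup M₀] [∀ i, Module A (M i)] [Module A M₀]

omit [AddCommGroup M₀] [Module A M₀] in
private lemma update_lt_self (u v : ∀ k : Fin r, M k) (i : Fin r) :
    Function.update (fun k => if (k : Fin r).val < i.val then u k else v k) i (v i)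
      = fun k => if k.val < i.val then u k else v k := by
  funext k
  by_cases h : k = i
  · subst h; simp
  · rw [Function.update_of_ne h]

omit [AddCommGroup M₀] [Module A M₀] in
private lemma update_lt_succ (u v : ∀ k : Fin r, M k) (i : Fin r) :
    Function.update (fun k => if (k : Fin r).val < i.val then u k else v k) i (u i)
      = fun k => if k.val < i.val + 1 then u k else v k := by
  funext k
  by_cases h : k = i
  · subst h; simp
  · rw [Function.update_of_ne h]
    have hne : k.val ≠ i.val := fun hh => h (Fin.ext hh)
    by_cases h2 : k.val < i.val
    · rw [if_pos h2, if_pos (by omega)]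
    · rw [if_neg h2, if_neg (by omega)]

omit [AddCommGroup M₀] [Module A M₀] in
private lemma if_all (u v : ∀ k : Fin r, M k) :
    (fun k => if (k : Fin r).val < r then u k else v k) = u :=
  funext fun k => if_pos k.isLt

omit [AddCommGroup M₀] [Module A M₀] in
private lemma if_none (u v : ∀ k : Fin r, M k) :
    (fun k => if (k : Fin r).val < 0 then u k else v k) = v :=
  funext fun _ => if_neg (Nat.not_lt_zero _)

/-- The key statement: the telescoping identity holds whenever scalar multiplication
by `α` is injective on the target module. -/
private theorem key (φ : MultilinearMap A M M₀)
    (hinj : Function.Injective (fun x : M₀ => α • x))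
    (y : ∀ i, Fin n → M i) (w : ∀ i, Fin (n + 1) → M i)
    (hw : ∀ i (j : Fin n), w i j.succ = w i j.castSucc + α • y i j) :
    ∑ i : Fin r, ∑ j : Fin n,
        φ (Function.update (fun k => if k < i then w k j.succ else w k j.castSucc) i (y i j)) =
    ∑ i : Fin r, ∑ j : Fin n,
        φ (Function.update (fun k => if k < i then w k (Fin.last n) else w k 0) i (y i j)) := by
  have hsub : ∀ i (j : Fin n), α • y i j = w i j.succ - w i j.castSucc := by
    intro i j; rw [hw i j]; abel
  apply hinj
  show α • _ = α • _
  simp only [Finset.smul_sum, Fin.lt_def]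
  have hL : ∀ (i : Fin r) (j : Fin n),
      α • φ (Function.update (fun k => if (k : Fin r).val < i.val then w k j.succ else w k j.castSucc)
          i (y i j))
      = (fun m : ℕ => φ (fun k => if (k : Fin r).val < m then w k j.succ else w k j.castSucc)) (↑i + 1)
        - (fun m : ℕ => φ (fun k => if (k : Fin r).val < m then w k j.succ else w k j.castSucc)) ↑i := by
    intro i j
    rw [← φ.map_update_smul, hsub i j, φ.map_update_sub,
      update_lt_succ (fun k => w k j.succ) (fun k => w k j.castSucc) i,
      update_lt_self (fun k => w k j.succ) (fun k => w k j.castSucc) i]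
  have hR : ∀ (i : Fin r) (j : Fin n),
      α • φ (Function.update (fun k => if (k : Fin r).val < i.val then w k (Fin.last n) else w k 0)
          i (y i j))
      = (fun t : Fin (n+1) => φ (Function.update
          (fun k => if (k : Fin r).val < i.val then w k (Fin.last n) else w k 0) i (w i t))) j.succ
        - (fun t : Fin (n+1) => φ (Function.update
          (fun k => if (k : Fin r).val < i.val then w k (Fin.last n) else w k 0) i (w i t))) j.castSucc := by
    intro i j
    rw [← φ.map_update_smul, hsub i j, φ.map_update_sub]
  calc ∑ i : Fin r, ∑ j : Fin n, α • φ (Function.update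
        (fun k => if (k : Fin r).val < i.val then w k j.succ else w k j.castSucc) i (y i j))
      = ∑ j : Fin n, ∑ i : Fin r, α • φ (Function.update
        (fun k => if (k : Fin r).val < i.val then w k j.succ else w k j.castSucc) i (y i j)) :=
        Finset.sum_comm
    _ = ∑ j : Fin n, ((fun t : Fin (n+1) => φ (fun k => w k t)) j.succ
          - (fun t : Fin (n+1) => φ (fun k => w k t)) j.castSucc) := by
        refine Finset.sum_congr rfl fun j _ => ?_
        rw [Finset.sum_congr rfl fun i _ => hL i j,
          teleN r (fun m => φ (fun k => if (k : Fin r).val < m then w k j.succ else w k j.castSucc))]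
        rw [if_all (fun k => w k j.succ) (fun k => w k j.castSucc),
          if_none (fun k => w k j.succ) (fun k => w k j.castSucc)]
    _ = φ (fun k => w k (Fin.last n)) - φ (fun k => w k 0) :=
        teleF n (fun t => φ (fun k => w k t))
    _ = ∑ i : Fin r, ((fun m : ℕ => φ (fun k => if (k : Fin r).val < m then w k (Fin.last n) else w k 0)) (↑i + 1)
          - (fun m : ℕ => φ (fun k => if (k : Fin r).val < m then w k (Fin.last n) else w k 0)) ↑i) := by
        rw [teleN r (fun m => φ (fun k => if (k : Fin r).val < m then w k (Fin.last n) else w k 0))]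
        rw [if_all (fun k => w k (Fin.last n)) (fun k => w k 0),
          if_none (fun k => w k (Fin.last n)) (fun k => w k 0)]
    _ = ∑ i : Fin r, ∑ j : Fin n, α • φ (Function.update
        (fun k => if (k : Fin r).val < i.val then w k (Fin.last n) else w k 0) i (y i j)) := by
        refine Finset.sum_congr rfl fun i _ => ?_
        rw [Finset.sum_congr rfl fun j _ => hR i j,
          teleF n (fun t => φ (Function.update
            (fun k => if (k : Fin r).val < i.val then w k (Fin.last n) else w k 0) i (w i t)))]
        rw [update_lt_succ (fun k => w k (Fin.last n)) (fun k => w k 0) i,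
          update_lt_self (fun k => w k (Fin.last n)) (fun k => w k 0) i]

/-- Expansion of a multilinear map applied to linear combinations. -/
private lemma expand (φ : MultilinearMap A M M₀) (v : ∀ k : Fin r, Option (Fin n) → A)
    (e : ∀ k, Option (Fin n) → M k) :
    φ (fun k => ∑ o : Option (Fin n), v k o • e k o)
      = ∑ g : Fin r → Option (Fin n), (∏ k, v k (g k)) • φ (fun k => e k (g k)) := by
  rw [φ.map_sum (fun k o => v k o • e k o)]
  exact Finset.sum_congr rfl fun g _ => φ.map_smul_univ (fun k => v k (g k)) (fun k => e k (g k))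

end key

/-- Let `A` be a ring, `α ∈ A` a non-zero-divisor, `M₀, M₁, …, M_r`
`A`-modules and `φ : M₁ × ⋯ × M_r → M₀` an `A`-multilinear map. Given elements
`y_{i,j}` (`0 ≤ j ≤ n−1`) and `w_{i,j}` (`0 ≤ j ≤ n`) of `M_i` with
`w_{i,j+1} = w_{i,j} + α·y_{i,j}`, the two double sums
`Σ_i Σ_j φ(w_{1,j+1},…,w_{i−1,j+1}, y_{i,j}, w_{i+1,j},…,w_{r,j})` and
`Σ_i Σ_j φ(w_{1,n},…,w_{i−1,n}, y_{i,j}, w_{i+1,0},…,w_{r,0})` are equal. -/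
theorem multilinear_telescoping_sum (A : Type*) [CommRing A] (α : A)
    (hα : α ∈ nonZeroDivisors A) (r n : ℕ) (hr : 1 ≤ r) (hn : 1 ≤ n)
    (M : Fin r → Type*) (M₀ : Type*)
    [∀ i, AddCommGroup (M i)] [AddCommGroup M₀] [∀ i, Module A (M i)] [Module A M₀]
    (φ : MultilinearMap A M M₀)
    (y : ∀ i, Fin n → M i) (w : ∀ i, Fin (n + 1) → M i)
    (hw : ∀ i (j : Fin n), w i j.succ = w i j.castSucc + α • y i j) :
    ∑ i : Fin r, ∑ j : Fin n,
        φ (Function.update (fun k => if k < i then w k j.succ else w k j.castSucc) i (y i j)) =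
    ∑ i : Fin r, ∑ j : Fin n,
        φ (Function.update (fun k => if k < i then w k (Fin.last n) else w k 0) i (y i j)) := by
  classical
  -- the universal model over functions
  set O := Option (Fin n) with hO
  let ρ : ∀ _ : Fin r, (O → A) →ₗ[A] ((Fin r → O) → A) := fun k =>
    { toFun := fun f g => f (g k)
      map_add' := fun a b => rfl
      map_smul' := fun c f => rfl }
  let Φ : MultilinearMap A (fun _ : Fin r => O → A) ((Fin r → O) → A) :=
    (MultilinearMap.mkPiAlgebra A (Fin r) ((Fin r → O) → A)).compLinearMap ρ
  have hΦ : ∀ (v : Fin r → O → A) (g : Fin r → O), Φ v g = ∏ k, v k (g k) := by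
    intro v g
    show (MultilinearMap.mkPiAlgebra A (Fin r) ((Fin r → O) → A)) (fun k => ρ k (v k)) g = _
    rw [MultilinearMap.mkPiAlgebra_apply, Finset.prod_apply]
    rfl
  have hinj : Function.Injective (fun x : (Fin r → O) → A => α • x) := by
    intro x z h
    funext g
    have h2 := congrFun h g
    simp only [Pi.smul_apply, smul_eq_mul] at h2
    exact (mul_cancel_left_mem_nonZeroDivisors hα).mp h2
  -- universal elements
  let y' : ∀ _ : Fin r, Fin n → (O → A) := fun _ l o => if o = some l then 1 else 0
  let w' : ∀ _ : Fin r, Fin (n + 1) → (O → A) := fun _ j o =>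
    Option.rec 1 (fun l => if (l : ℕ) < (j : ℕ) then α else 0) o
  have hw' : ∀ (k : Fin r) (j : Fin n), w' k j.succ = w' k j.castSucc + α • y' k j := by
    intro k j
    funext o
    cases o with
    | none => show (1 : A) = 1 + α * 0; ring
    | some l =>
      show (if (l : ℕ) < (j.succ : ℕ) then α else 0)
          = (if (l : ℕ) < (j.castSucc : ℕ) then α else 0) + α * (if some l = some j then 1 else 0)
      simp only [Fin.val_succ, Fin.coe_castSucc, Option.some.injEq]
      by_cases h1 : l = j
      · subst h1
        rw [if_pos (by omega), if_neg (by omega), if_pos rfl]; ring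
      · have : (l : ℕ) ≠ (j : ℕ) := fun hh => h1 (Fin.ext hh)
        rw [if_neg h1]
        by_cases h2 : (l : ℕ) < (j : ℕ)
        · rw [if_pos (by omega), if_pos h2]; ring
        · rw [if_neg (by omega), if_neg h2]; ring
  have hkey := key (α := α) Φ hinj y' w' hw'
  -- transfer back
  let elem : ∀ k : Fin r, O → M k := fun k o => Option.rec (w k 0) (y k) o
  let ψ : ∀ k : Fin r, (O → A) → M k := fun k f => ∑ o : O, f o • elem k o
  have hψy : ∀ (k : Fin r) (l : Fin n), ψ k (y' k l) = y k l := by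
    intro k l
    show ∑ o : O, (if o = some l then (1:A) else 0) • elem k o = y k l
    rw [Fintype.sum_option]
    have h0 : (if (none : O) = some l then (1:A) else 0) • elem k none = 0 := by
      rw [if_neg (by simp), zero_smul]
    rw [h0, zero_add]
    have h1 : ∀ l' : Fin n, (if (some l' : O) = some l then (1:A) else 0) • elem k (some l')
        = if l' = l then y k l' else 0 := by
      intro l'
      by_cases h : l' = l
      · subst h; rw [if_pos rfl, if_pos rfl]; exact one_smul A _
      · rw [if_neg (by simpa using h), if_neg h, zero_smul]
    rw [Finset.sum_congr rfl fun l' _ => h1 l',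
      Finset.sum_ite_eq' Finset.univ l (fun l' => y k l'), if_pos (Finset.mem_univ l)]
  have hψw : ∀ (k : Fin r) (j : Fin (n + 1)), ψ k (w' k j) = w k j := by
    intro k j
    show ∑ o : O, _ • elem k o = w k j
    rw [Fintype.sum_option]
    show (1:A) • w k 0 + ∑ l : Fin n, (if (l:ℕ) < (j:ℕ) then α else 0) • y k l = w k j
    rw [one_smul]
    induction j using Fin.induction with
    | zero => simp
    | succ j ih =>
      have e : ∀ l : Fin n, (if (l:ℕ) < (j.succ:ℕ) then α else 0) • y k l
          = (if (l:ℕ) < (j.castSucc:ℕ) then α else 0) • y k l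
            + (if l = j then α • y k l else 0) := by
        intro l
        simp only [Fin.val_succ, Fin.coe_castSucc]
        by_cases h1 : l = j
        · subst h1
          rw [if_pos (by omega), if_neg (by omega), if_pos rfl, zero_smul, zero_add]
        · have : (l : ℕ) ≠ (j : ℕ) := fun hh => h1 (Fin.ext hh)
          rw [if_neg h1, add_zero]
          by_cases h2 : (l : ℕ) < (j : ℕ)
          · rw [if_pos (by omega), if_pos h2]
          · rw [if_neg (by omega), if_neg h2]
      rw [Finset.sum_congr rfl fun l _ => e l, Finset.sum_add_distrib,
        Finset.sum_ite_eq' Finset.univ j (fun l => α • y k l), if_pos (Finset.mem_univ j),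
        ← add_assoc, ih, hw]
  -- per-term identification
  have hterm : ∀ (u' : ∀ _ : Fin r, O → A) (u : ∀ k, M k),
      (∀ k, ψ k (u' k) = u k) →
      φ u = ∑ g : Fin r → O, Φ u' g • φ (fun k => elem k (g k)) := by
    intro u' u hu
    have : u = fun k => ∑ o : O, u' k o • elem k o := by
      funext k; rw [← hu k]
    rw [this, expand φ u' elem]
    exact Finset.sum_congr rfl fun g _ => by rw [hΦ]
  have hX : ∀ (i : Fin r) (j : Fin n),
      φ (Function.update (fun k => if k < i then w k j.succ else w k j.castSucc) i (y i j))
      = ∑ g : Fin r → O,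
          Φ (Function.update (fun k => if k < i then w' k j.succ else w' k j.castSucc) i (y' i j)) g
            • φ (fun k => elem k (g k)) := by
    intro i j
    apply hterm
    intro k
    by_cases h : k = i
    · subst h; rw [Function.update_self, Function.update_self]; exact hψy k j
    · rw [Function.update_of_ne h, Function.update_of_ne h]
      by_cases h2 : k < i
      · rw [if_pos h2, if_pos h2]; exact hψw k j.succ
      · rw [if_neg h2, if_neg h2]; exact hψw k j.castSucc
  have hY : ∀ (i : Fin r) (j : Fin n),
      φ (Function.update (fun k => if k < i then w k (Fin.last n) else w k 0) i (y i j))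
      = ∑ g : Fin r → O,
          Φ (Function.update (fun k => if k < i then w' k (Fin.last n) else w' k 0) i (y' i j)) g
            • φ (fun k => elem k (g k)) := by
    intro i j
    apply hterm
    intro k
    by_cases h : k = i
    · subst h; rw [Function.update_self, Function.update_self]; exact hψy k j
    · rw [Function.update_of_ne h, Function.update_of_ne h]
      by_cases h2 : k < i
      · rw [if_pos h2, if_pos h2]; exact hψw k (Fin.last n)
      · rw [if_neg h2, if_neg h2]; exact hψw k 0
  have main : ∀ T : Fin r → Fin n → ((Fin r → O) → A),
      (∑ i : Fin r, ∑ j : Fin n, ∑ g : Fin r → O, T i j g • φ (fun k => elem k (g k)))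
        = ∑ g : Fin r → O, ((∑ i : Fin r, ∑ j : Fin n, T i j) g) • φ (fun k => elem k (g k)) := by
    intro T
    rw [Finset.sum_congr rfl fun i (_ : i ∈ Finset.univ) => Finset.sum_comm, Finset.sum_comm]
    refine Finset.sum_congr rfl fun g _ => ?_
    simp only [Finset.sum_apply, Finset.sum_smul]
  calc ∑ i : Fin r, ∑ j : Fin n,
        φ (Function.update (fun k => if k < i then w k j.succ else w k j.castSucc) i (y i j))
      = ∑ i : Fin r, ∑ j : Fin n, ∑ g : Fin r → O,
          Φ (Function.update (fun k => if k < i then w' k j.succ else w' k j.castSucc) i (y' i j)) g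
            • φ (fun k => elem k (g k)) :=
        Finset.sum_congr rfl fun i _ => Finset.sum_congr rfl fun j _ => hX i j
    _ = ∑ g : Fin r → O, ((∑ i : Fin r, ∑ j : Fin n,
          Φ (Function.update (fun k => if k < i then w' k j.succ else w' k j.castSucc) i (y' i j))) g)
            • φ (fun k => elem k (g k)) :=
        main _
    _ = ∑ g : Fin r → O, ((∑ i : Fin r, ∑ j : Fin n,
          Φ (Function.update (fun k => if k < i then w' k (Fin.last n) else w' k 0) i (y' i j))) g)
            • φ (fun k => elem k (g k)) := by rw [hkey]
    _ = ∑ i : Fin r, ∑ j : Fin n, ∑ g : Fin r → O,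
          Φ (Function.update (fun k => if k < i then w' k (Fin.last n) else w' k 0) i (y' i j)) g
            • φ (fun k => elem k (g k)) :=
        (main _).symm
    _ = ∑ i : Fin r, ∑ j : Fin n,
        φ (Function.update (fun k => if k < i then w k (Fin.last n) else w k 0) i (y i j)) :=
        Finset.sum_congr rfl fun i _ => Finset.sum_congr rfl fun j _ => (hY i j).symm
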